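/- Let F be a field containing a nontrivial third root of unity, i.e., an element ω ≠ 1 with ω³ = 1. Then there exist 9 pairwise distinct lines in ℙ²(F) having exactly 12 triple points and no other intersection points (every point lying on at least two of the lines lies on exactly three of them); this is the dual Hesse configuration. -/

import Mathlib

/-- The projective plane over `F` (also used, by duality, for the lines of that plane). -/
abbrev ProjPlane (F : Type*) [Field F] := Projectivization F (Fin 3 → F)

/-- The point `P` lies on the line `L` (a line is recorded by the projective class of the
coefficient vector of a defining linear form): the pairing of representatives vanishes.
This does not depend on the choice of representatives. -/
def OnLine {F : Type*} [Field F] (P L : ProjPlane F) : Prop :=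
  dotProduct P.rep L.rep = 0

/-- The multiplicity of a point `P` with respect to a configuration `lines`:
the number of lines of the configuration passing through `P`. -/
noncomputable def mult {F : Type*} [Field F] (lines : Set (ProjPlane F))
    (P : ProjPlane F) : ℕ :=
  {L ∈ lines | OnLine P L}.ncard

namespace DH
open Projectivization Matrix

variable {F : Type*} [Field F]

def w (ω : F) (i : ZMod 3) : F := ω ^ i.val

def lineVec (ω : F) (x : Fin 3 × ZMod 3) : Fin 3 → F :=
  ![![0, 1, -w ω x.2], ![1, 0, -w ω x.2], ![1, -w ω x.2, 0]] x.1

def ptVec (ω : F) : (Fin 3 ⊕ ZMod 3 × ZMod 3) → Fin 3 → F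
  | .inl t => ![![1,0,0],![0,1,0],![0,0,1]] t
  | .inr (a,b) => ![1, w ω a, w ω b]

def incid : (Fin 3 ⊕ ZMod 3 × ZMod 3) → Fin 3 × ZMod 3 → Prop
  | .inl t, x => x.1 = t
  | .inr (a,b), x => ![a = b + x.2, b + x.2 = 0, a + x.2 = 0] x.1

lemma tri3 : ∀ t : Fin 3, t = 0 ∨ t = 1 ∨ t = 2 := by decide

lemma triZ : ∀ t : ZMod 3, t = 0 ∨ t = 1 ∨ t = 2 := by decide

section
variable {ω : F} (hω : ω ≠ 1) (hω3 : ω ^ 3 = 1)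
include hω3

lemma omega_ne_zero : ω ≠ 0 := by rintro rfl; simp at hω3

lemma w_ne_zero (i : ZMod 3) : w ω i ≠ 0 := pow_ne_zero _ (omega_ne_zero hω3)

lemma w_add (a b : ZMod 3) : w ω (a + b) = w ω a * w ω b := by
  rw [w, w, w, ZMod.val_add, ← pow_eq_pow_mod _ hω3, ← pow_add]

omit hω3 in
lemma w_zero : w ω (0 : ZMod 3) = 1 := by simp [w]

include hω in
lemma w_inj : Function.Injective (w (F := F) ω) := by
  have h0 : ω ≠ 0 := omega_ne_zero hω3
  have e0 : w ω (0:ZMod 3) = 1 := by simp [w]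
  have e1 : w ω 1 = ω := by norm_num [w, ZMod.val_one]
  have e2 : w ω 2 = ω ^ 2 := by
    have : ((2 : ZMod 3)).val = 2 := rfl
    rw [w, this]
  have h2 : ω ^ 2 ≠ 1 := by
    intro h
    apply hω
    calc ω = ω ^ 2 * ω := by rw [h]; ring
    _ = 1 := by rw [← pow_succ]; exact hω3
  have h21 : ω ^ 2 ≠ ω := by
    intro h; apply hω
    have : ω * ω = ω * 1 := by rw [mul_one]; linear_combination h
    exact mul_left_cancel₀ h0 this
  intro a b hab
  rcases triZ a with rfl | rfl | rfl <;> rcases triZ b with rfl | rfl | rfl <;>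
    simp only [e0, e1, e2] at hab <;> first
      | rfl
      | exact absurd hab.symm hω | exact absurd hab hω
      | exact absurd hab.symm h2 | exact absurd hab h2
      | exact absurd hab.symm h21 | exact absurd hab h21

lemma lineVec_ne_zero (x : Fin 3 × ZMod 3) : lineVec ω x ≠ 0 := by
  obtain ⟨t, i⟩ := x
  rcases tri3 t with rfl | rfl | rfl <;>
    · intro h
      have h1 := congrFun h 1
      have h0 := congrFun h 0
      simp [lineVec, w_ne_zero hω3] at h1 h0

lemma ptVec_ne_zero (s : Fin 3 ⊕ ZMod 3 × ZMod 3) : ptVec ω s ≠ 0 := by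
  rcases s with t | ⟨a, b⟩
  · rcases tri3 t with rfl | rfl | rfl <;>
      · intro h
        have h0 := congrFun h 0
        have h1 := congrFun h 1
        have h2 := congrFun h 2
        simp [ptVec] at h0 h1 h2
  · intro h
    have h0 := congrFun h 0
    simp [ptVec] at h0

noncomputable def Lmap : Fin 3 × ZMod 3 → ProjPlane F :=
  fun x => Projectivization.mk F (lineVec ω x) (lineVec_ne_zero hω3 x)

noncomputable def Pmap : (Fin 3 ⊕ ZMod 3 × ZMod 3) → ProjPlane F :=
  fun s => Projectivization.mk F (ptVec ω s) (ptVec_ne_zero hω3 s)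

omit hω3 in
lemma onLine_mk {v u : Fin 3 → F} (hv : v ≠ 0) (hu : u ≠ 0) :
    OnLine (Projectivization.mk F v hv) (Projectivization.mk F u hu) ↔
      dotProduct v u = 0 := by
  obtain ⟨a, ha⟩ := exists_smul_eq_mk_rep F v hv
  obtain ⟨b, hb⟩ := exists_smul_eq_mk_rep F u hu
  unfold OnLine
  rw [← ha, ← hb, Units.smul_def, Units.smul_def, smul_dotProduct, dotProduct_smul,
    smul_eq_mul, smul_eq_mul, mul_eq_zero, mul_eq_zero]
  simp [Units.ne_zero]

include hω in
lemma dot_eq_zero_iff (s : Fin 3 ⊕ ZMod 3 × ZMod 3) (x : Fin 3 × ZMod 3) :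
    dotProduct (ptVec ω s) (lineVec ω x) = 0 ↔ incid s x := by
  obtain ⟨t, i⟩ := x
  have hwne := w_ne_zero (ω := ω) hω3
  have hinj := w_inj hω hω3
  have key : ∀ u v : ZMod 3, w ω u - w ω v = 0 ↔ u = v := by
    intro u v; rw [sub_eq_zero, hinj.eq_iff]
  rcases s with u | ⟨a, b⟩
  · rcases tri3 t with rfl | rfl | rfl <;> rcases tri3 u with rfl | rfl | rfl <;>
      simp [ptVec, lineVec, incid, dotProduct, Fin.sum_univ_three, hwne]
  · rcases tri3 t with rfl | rfl | rfl <;>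
      simp only [ptVec, lineVec, incid, dotProduct, Fin.sum_univ_three,
        Matrix.cons_val_zero, Matrix.cons_val_one, Matrix.head_cons, Matrix.cons_val_two,
        Matrix.tail_cons]
    · rw [show (1 : F) * 0 + w ω a * 1 + w ω b * -w ω i = w ω a - w ω (b + i) by
        rw [w_add hω3]; ring, key]
    · rw [show (1 : F) * 1 + w ω a * 0 + w ω b * -w ω i = w ω 0 - w ω (b + i) by
        rw [w_add hω3, w_zero]; ring, key]
      exact eq_comm
    · rw [show (1 : F) * 1 + w ω a * -w ω i + w ω b * 0 = w ω 0 - w ω (a + i) by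
        rw [w_add hω3, w_zero]; ring, key]
      exact eq_comm


include hω in
lemma Lmap_inj : Function.Injective (Lmap (ω := ω) hω3) := by
  have hwne := w_ne_zero (ω := ω) hω3
  have hinj := w_inj hω hω3
  intro x y h
  simp only [Lmap] at h; rw [mk_eq_mk_iff'] at h
  obtain ⟨c, hc⟩ := h
  obtain ⟨t, i⟩ := x; obtain ⟨u, j⟩ := y
  have h0 := congrFun hc 0
  have h1 := congrFun hc 1
  have h2 := congrFun hc 2
  rcases tri3 t with rfl | rfl | rfl <;> rcases tri3 u with rfl | rfl | rfl <;>
    simp only [lineVec, Pi.smul_apply, smul_eq_mul, Matrix.cons_val_zero,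
      Matrix.cons_val_one, Matrix.head_cons, Matrix.cons_val_two, Matrix.tail_cons,
      mul_zero, mul_one, mul_neg, neg_inj, neg_eq_zero, Prod.mk.injEq, true_and] at h0 h1 h2 ⊢
  · exact hinj (by rw [← h2, h1, one_mul])
  · exact absurd h1 zero_ne_one
  · exact absurd (neg_eq_zero.mp h2.symm) (hwne i)
  · exact absurd h0 zero_ne_one
  · exact hinj (by rw [← h2, h0, one_mul])
  · exact absurd (by rw [h0, one_mul] at h1; exact h1 : w ω j = 0) (hwne j)
  · exact absurd h0 zero_ne_one
  · exact absurd (neg_eq_zero.mp h1.symm) (hwne i)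
  · exact hinj (by rw [← h1, h0, one_mul])

include hω in
lemma Pmap_inj : Function.Injective (Pmap (ω := ω) hω3) := by
  have hwne := w_ne_zero (ω := ω) hω3
  have hinj := w_inj hω hω3
  intro x y h
  simp only [Pmap] at h; rw [mk_eq_mk_iff'] at h
  obtain ⟨c, hc⟩ := h
  have h0 := congrFun hc 0
  have h1 := congrFun hc 1
  have h2 := congrFun hc 2
  rcases x with t | ⟨a, b⟩ <;> rcases y with u | ⟨a', b'⟩ <;>
    [(rcases tri3 t with rfl | rfl | rfl <;> rcases tri3 u with rfl | rfl | rfl);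
     rcases tri3 t with rfl | rfl | rfl;
     rcases tri3 u with rfl | rfl | rfl;
     skip] <;>
    simp only [ptVec, Pi.smul_apply, smul_eq_mul, Matrix.cons_val_zero,
      Matrix.cons_val_one, Matrix.head_cons, Matrix.cons_val_two, Matrix.tail_cons,
      mul_zero, mul_one, Sum.inl.injEq, Sum.inr.injEq, Prod.mk.injEq] at h0 h1 h2 ⊢
  · exact absurd h0 zero_ne_one
  · exact absurd h0 zero_ne_one
  · exact absurd h1 zero_ne_one
  · exact absurd h1 zero_ne_one
  · exact absurd h2 zero_ne_one
  · exact absurd h2 zero_ne_one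
  · exact absurd (by rw [h0, one_mul] at h1; exact h1 : w ω a' = 0) (hwne a')
  · exact absurd (by rw [h0, zero_mul] at h1; exact h1.symm : (1 : F) = 0) one_ne_zero
  · exact absurd (by rw [h0, zero_mul] at h2; exact h2.symm : (1 : F) = 0) one_ne_zero
  · exact absurd h1.symm (hwne a)
  · exact absurd h0 zero_ne_one
  · exact absurd h0 zero_ne_one
  · exact ⟨(hinj (by rw [← h1, h0, one_mul])).symm, (hinj (by rw [← h2, h0, one_mul])).symm⟩

include hω in
lemma meet {p : Fin 3 → F} (hp : p ≠ 0) {x y : Fin 3 × ZMod 3} (hxy : x ≠ y)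
    (d1 : dotProduct p (lineVec ω x) = 0)
    (d2 : dotProduct p (lineVec ω y) = 0) :
    ∃ s, Projectivization.mk F p hp = Pmap (ω := ω) hω3 s := by
  have hwne := w_ne_zero (ω := ω) hω3
  have hinj := w_inj hω hω3
  have mkeq : ∀ (s) (c : F), (∀ k, p k = c * ptVec ω s k) →
      Projectivization.mk F p hp = Pmap (ω := ω) hω3 s := by
    intro s c h
    simp only [Pmap]; rw [mk_eq_mk_iff']
    exact ⟨c, by funext k; rw [Pi.smul_apply, smul_eq_mul]; exact (h k).symm⟩
  obtain ⟨t, i⟩ := x; obtain ⟨u, j⟩ := y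
  rcases tri3 t with rfl | rfl | rfl <;> rcases tri3 u with rfl | rfl | rfl <;>
    simp only [lineVec, dotProduct, Fin.sum_univ_three, Matrix.cons_val_zero,
      Matrix.cons_val_one, Matrix.head_cons, Matrix.cons_val_two, Matrix.tail_cons,
      mul_zero, mul_one, mul_neg, zero_add, add_zero] at d1 d2
  -- helpers
  all_goals (
    have winv : ∀ a : ZMod 3, w ω a * w ω (-a) = 1 := by
      intro a; rw [← w_add hω3, add_neg_cancel, w_zero])
  -- (0,i),(0,j)
  · have hij : i ≠ j := by simpa using hxy
    have hz : p 2 = 0 := by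
      rcases mul_eq_zero.1 (show p 2 * (w ω i - w ω j) = 0 by linear_combination d2 - d1)
        with h | h
      · exact h
      · exact absurd (hinj (sub_eq_zero.1 h)) hij
    have h1 : p 1 = 0 := by linear_combination d1 + w ω i * hz
    refine ⟨_, mkeq (.inl 0) (p 0) ?_⟩
    intro k; rcases tri3 k with rfl | rfl | rfl <;> simp [ptVec, h1, hz, Matrix.vecHead, Matrix.vecTail]
  -- (0,i),(1,j)
  · refine ⟨_, mkeq (.inr (i - j, -j)) (p 2 * w ω j) ?_⟩
    have e1 : w ω j * w ω (i - j) = w ω i := by rw [← w_add hω3]; congr 1; ring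
    intro k; rcases tri3 k with rfl | rfl | rfl <;> simp only [ptVec,
      Matrix.cons_val_zero, Matrix.cons_val_one, Matrix.head_cons, Matrix.cons_val_two,
      Matrix.tail_cons, mul_one]
    · linear_combination d2
    · linear_combination d1 - p 2 * e1
    · linear_combination (-(p 2)) * winv j
  -- (0,i),(2,j)
  · refine ⟨_, mkeq (.inr (-j, -i - j)) (p 2 * w ω i * w ω j) ?_⟩
    have e1 : w ω j * w ω (-j) = 1 := winv j
    have e2 : w ω i * w ω j * w ω (-i - j) = 1 := by
      rw [← w_add hω3, ← w_add hω3]; rw [show i + j + (-i - j) = 0 by ring, w_zero]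
    intro k; rcases tri3 k with rfl | rfl | rfl <;> simp only [ptVec,
      Matrix.cons_val_zero, Matrix.cons_val_one, Matrix.head_cons, Matrix.cons_val_two,
      Matrix.tail_cons, mul_one]
    · linear_combination d2 + w ω j * d1
    · linear_combination d1 - p 2 * w ω i * e1
    · linear_combination (-(p 2)) * e2
  -- (1,i),(0,j)
  · refine ⟨_, mkeq (.inr (j - i, -i)) (p 2 * w ω i) ?_⟩
    have e1 : w ω i * w ω (j - i) = w ω j := by rw [← w_add hω3]; congr 1; ring
    intro k; rcases tri3 k with rfl | rfl | rfl <;> simp only [ptVec,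
      Matrix.cons_val_zero, Matrix.cons_val_one, Matrix.head_cons, Matrix.cons_val_two,
      Matrix.tail_cons, mul_one]
    · linear_combination d1
    · linear_combination d2 - p 2 * e1
    · linear_combination (-(p 2)) * winv i
  -- (1,i),(1,j)
  · have hij : i ≠ j := by simpa using hxy
    have hz : p 2 = 0 := by
      rcases mul_eq_zero.1 (show p 2 * (w ω i - w ω j) = 0 by linear_combination d2 - d1)
        with h | h
      · exact h
      · exact absurd (hinj (sub_eq_zero.1 h)) hij
    have h0 : p 0 = 0 := by linear_combination d1 + w ω i * hz
    refine ⟨_, mkeq (.inl 1) (p 1) ?_⟩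
    intro k; rcases tri3 k with rfl | rfl | rfl <;> simp [ptVec, h0, hz, Matrix.vecHead, Matrix.vecTail]
  -- (1,i),(2,j)
  · refine ⟨_, mkeq (.inr (-j, -i)) (p 2 * w ω i) ?_⟩
    intro k; rcases tri3 k with rfl | rfl | rfl <;> simp only [ptVec,
      Matrix.cons_val_zero, Matrix.cons_val_one, Matrix.head_cons, Matrix.cons_val_two,
      Matrix.tail_cons, mul_one]
    · linear_combination d1
    · linear_combination w ω (-j) * d1 - w ω (-j) * d2 - p 1 * winv j
    · linear_combination (-(p 2)) * winv i
  -- (2,i),(0,j)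
  · refine ⟨_, mkeq (.inr (-i, -j - i)) (p 2 * w ω j * w ω i) ?_⟩
    have e2 : w ω j * w ω i * w ω (-j - i) = 1 := by
      rw [← w_add hω3, ← w_add hω3]; rw [show j + i + (-j - i) = 0 by ring, w_zero]
    intro k; rcases tri3 k with rfl | rfl | rfl <;> simp only [ptVec,
      Matrix.cons_val_zero, Matrix.cons_val_one, Matrix.head_cons, Matrix.cons_val_two,
      Matrix.tail_cons, mul_one]
    · linear_combination d1 + w ω i * d2
    · linear_combination d2 - p 2 * w ω j * winv i
    · linear_combination (-(p 2)) * e2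
  -- (2,i),(1,j)
  · refine ⟨_, mkeq (.inr (-i, -j)) (p 2 * w ω j) ?_⟩
    intro k; rcases tri3 k with rfl | rfl | rfl <;> simp only [ptVec,
      Matrix.cons_val_zero, Matrix.cons_val_one, Matrix.head_cons, Matrix.cons_val_two,
      Matrix.tail_cons, mul_one]
    · linear_combination d2
    · linear_combination w ω (-i) * d2 - w ω (-i) * d1 - p 1 * winv i
    · linear_combination (-(p 2)) * winv j
  -- (2,i),(2,j)
  · have hij : i ≠ j := by simpa using hxy
    have hz : p 1 = 0 := by
      rcases mul_eq_zero.1 (show p 1 * (w ω i - w ω j) = 0 by linear_combination d2 - d1)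
        with h | h
      · exact h
      · exact absurd (hinj (sub_eq_zero.1 h)) hij
    have h0 : p 0 = 0 := by linear_combination d1 + w ω i * hz
    refine ⟨_, mkeq (.inl 2) (p 2) ?_⟩
    intro k; rcases tri3 k with rfl | rfl | rfl <;> simp [ptVec, h0, hz, Matrix.vecHead, Matrix.vecTail]

include hω in
lemma incid_inr_iff (a b : ZMod 3) (x : Fin 3 × ZMod 3) :
    incid (.inr (a, b)) x ↔ (x = (0, a - b) ∨ x = (1, -b) ∨ x = (2, -a)) := by
  obtain ⟨t, i⟩ := x
  rcases tri3 t with rfl | rfl | rfl <;>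
    simp only [incid, Matrix.cons_val_zero, Matrix.cons_val_one, Matrix.head_cons,
      Matrix.cons_val_two, Matrix.tail_cons, Prod.mk.injEq,
      show ((0:Fin 3) = 1) = False by simp, show ((0:Fin 3) = 2) = False by simp,
      show ((1:Fin 3) = 0) = False by simp, show ((1:Fin 3) = 2) = False by simp,
      show ((2:Fin 3) = 0) = False by simp, show ((2:Fin 3) = 1) = False by simp,
      false_and, or_false, false_or, true_and]
  · exact ⟨fun h => by rw [h]; ring, fun h => by rw [h]; ring⟩
  · exact ⟨fun h => by linear_combination h, fun h => by linear_combination h⟩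
  · exact ⟨fun h => by linear_combination h, fun h => by linear_combination h⟩

include hω in
lemma mult_Pmap (s : Fin 3 ⊕ ZMod 3 × ZMod 3) :
    mult (Set.range (Lmap (ω := ω) hω3)) (Pmap (ω := ω) hω3 s) = 3 := by
  have hLinj := Lmap_inj hω hω3
  have hset : {L ∈ Set.range (Lmap (ω := ω) hω3) | OnLine (Pmap (ω := ω) hω3 s) L}
      = Lmap (ω := ω) hω3 '' {x | incid s x} := by
    ext L
    constructor
    · rintro ⟨⟨x, rfl⟩, hon⟩
      exact ⟨x, (dot_eq_zero_iff hω hω3 s x).1 ((onLine_mk _ _).1 hon), rfl⟩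
    · rintro ⟨x, hx, rfl⟩
      exact ⟨⟨x, rfl⟩, (onLine_mk _ _).2 ((dot_eq_zero_iff hω hω3 s x).2 hx)⟩
  rw [mult, hset, Set.ncard_image_of_injective _ hLinj]
  rcases s with t | ⟨a, b⟩
  · have h1 : {x : Fin 3 × ZMod 3 | incid (.inl t) x} = Prod.mk t '' Set.univ := by
      ext ⟨u, i⟩
      simp only [incid, Set.mem_setOf_eq, Set.image_univ, Set.mem_range, Prod.mk.injEq]
      exact ⟨fun h => ⟨i, h.symm, rfl⟩, fun ⟨i', h, h2⟩ => h.symm⟩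
    rw [h1, Set.ncard_image_of_injective _ (fun a b h => (Prod.ext_iff.1 h).2),
      Set.ncard_univ, Nat.card_eq_fintype_card]
    simp
  · have h1 : {x | incid (.inr (a, b)) x} =
        ({((0 : Fin 3), a - b), (1, -b), (2, -a)} : Set (Fin 3 × ZMod 3)) := by
      ext x
      rw [Set.mem_setOf_eq, incid_inr_iff hω hω3]
      simp
    rw [h1, Set.ncard_insert_of_notMem (by simp), Set.ncard_insert_of_notMem (by simp),
      Set.ncard_singleton]

include hω in
lemma mem_two (P : ProjPlane F) (h2 : 2 ≤ mult (Set.range (Lmap (ω := ω) hω3)) P) :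
    ∃ s, P = Pmap (ω := ω) hω3 s := by
  rw [mult] at h2
  have hsub : {L ∈ Set.range (Lmap (ω := ω) hω3) | OnLine P L} ⊆
      Set.range (Lmap (ω := ω) hω3) := fun L hL => hL.1
  have hfin := (Set.finite_range (Lmap (ω := ω) hω3)).subset hsub
  obtain ⟨L1, L2, hL1, hL2, hne⟩ := (Set.one_lt_ncard_iff hfin).1 (by omega)
  obtain ⟨x, rfl⟩ := hL1.1
  obtain ⟨y, rfl⟩ := hL2.1
  have dots : ∀ z : Fin 3 × ZMod 3, OnLine P (Lmap (ω := ω) hω3 z) →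
      dotProduct P.rep (lineVec ω z) = 0 := by
    intro z h
    unfold OnLine at h
    obtain ⟨c, hc⟩ := exists_smul_eq_mk_rep F (lineVec ω z) (lineVec_ne_zero hω3 z)
    simp only [Lmap] at h
    rw [← hc, Units.smul_def, dotProduct_smul, smul_eq_mul] at h
    exact (mul_eq_zero.1 h).resolve_left (Units.ne_zero c)
  have hxy : x ≠ y := by rintro rfl; exact hne rfl
  obtain ⟨s, hs⟩ := meet hω hω3 (Projectivization.rep_nonzero P) hxy
    (dots x hL1.2) (dots y hL2.2)
  exact ⟨s, by rw [← Projectivization.mk_rep P]; exact hs⟩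

end
end DH


/-- Over every field containing a nontrivial third root of unity there is a configuration of
`9` pairwise distinct lines in `ℙ²(F)` with exactly `12` triple points and no other
intersection points: every point lying on at least two of the lines lies on exactly three of
them (the dual Hesse configuration). -/
theorem nine_lines_twelve_triple_points (F : Type*) [Field F]
    (ω : F) (hω : ω ≠ 1) (hω3 : ω ^ 3 = 1) :
    ∃ lines : Set (ProjPlane F),
      lines.ncard = 9 ∧
      {P : ProjPlane F | mult lines P = 3}.ncard = 12 ∧
      ∀ P : ProjPlane F, 2 ≤ mult lines P → mult lines P = 3 := by
  refine ⟨Set.range (DH.Lmap (ω := ω) hω3), ?_, ?_, ?_⟩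
  · rw [← Set.image_univ, Set.ncard_image_of_injective _ (DH.Lmap_inj hω hω3),
      Set.ncard_univ, Nat.card_eq_fintype_card]
    simp
  · have hset : {P : ProjPlane F | mult (Set.range (DH.Lmap (ω := ω) hω3)) P = 3}
        = Set.range (DH.Pmap (ω := ω) hω3) := by
      ext P
      constructor
      · intro h3
        obtain ⟨s, rfl⟩ := DH.mem_two hω hω3 P (by
          rw [Set.mem_setOf_eq] at h3; omega)
        exact ⟨s, rfl⟩
      · rintro ⟨s, rfl⟩
        exact DH.mult_Pmap hω hω3 s
    rw [hset, ← Set.image_univ, Set.ncard_image_of_injective _ (DH.Pmap_inj hω hω3),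
      Set.ncard_univ, Nat.card_eq_fintype_card]
    simp
  · intro P h2
    obtain ⟨s, rfl⟩ := DH.mem_two hω hω3 P h2
    exact DH.mult_Pmap hω hω3 s
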